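/- Let λ₁, λ₂, λ₃, t₃ be real numbers with |t₃| + |λ₃| < 1 such that the map Φ(w₀I + w·σ) = w₀I + ((0,0,t₃) + diag(λ₁,λ₂,λ₃)w)·σ is completely positive. Then (λ₁ + λ₂)² ≤ (1 + λ₃)² − t₃² and (λ₁ − λ₂)² ≤ (1 − λ₃)² − t₃². -/

import Mathlib

open Matrix
open scoped ComplexOrder

noncomputable section

def sigmaX : Matrix (Fin 2) (Fin 2) ℂ := !![0, 1; 1, 0]
def sigmaY : Matrix (Fin 2) (Fin 2) ℂ := !![0, -Complex.I; Complex.I, 0]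
def sigmaZ : Matrix (Fin 2) (Fin 2) ℂ := !![1, 0; 0, -1]

/-- A linear map `Φ` on `M₂(ℂ)` is completely positive if `Φ ⊗ id_{Mₙ}` is
positivity preserving for every `n`. -/
def CompletelyPositive (Φ : Matrix (Fin 2) (Fin 2) ℂ →ₗ[ℂ] Matrix (Fin 2) (Fin 2) ℂ) : Prop :=
  ∀ (n : ℕ) (M : Matrix (Fin 2 × Fin n) (Fin 2 × Fin n) ℂ), M.PosSemidef →
    (Matrix.of fun p q : Fin 2 × Fin n =>
      Φ (Matrix.of fun i j : Fin 2 => M (i, p.2) (j, q.2)) p.1 q.1).PosSemidef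

def ChoiM : Matrix (Fin 2 × Fin 2) (Fin 2 × Fin 2) ℂ :=
  Matrix.of fun p q => (if p.1 = p.2 then 1 else 0) * (if q.1 = q.2 then 1 else 0)

lemma ChoiM_posSemidef : ChoiM.PosSemidef := by
  have : ChoiM = (Matrix.of fun (_ : Fin 1) (p : Fin 2 × Fin 2) => if p.1 = p.2 then (1:ℂ) else 0)ᴴ *
      (Matrix.of fun (_ : Fin 1) (p : Fin 2 × Fin 2) => if p.1 = p.2 then (1:ℂ) else 0) := by
    ext p q
    simp only [ChoiM, mul_apply, conjTranspose_apply, Fin.sum_univ_one, Matrix.of_apply]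
    split_ifs <;> simp
  rw [this]
  exact posSemidef_conjTranspose_mul_self _

lemma choi_e00 : (Matrix.of fun i j : Fin 2 => ChoiM (i,(0:Fin 2)) (j,(0:Fin 2))) = !![1,0;0,0] := by
  ext i j; fin_cases i <;> fin_cases j <;> simp [ChoiM]
lemma choi_e01 : (Matrix.of fun i j : Fin 2 => ChoiM (i,(0:Fin 2)) (j,(1:Fin 2))) = !![0,1;0,0] := by
  ext i j; fin_cases i <;> fin_cases j <;> simp [ChoiM]
lemma choi_e10 : (Matrix.of fun i j : Fin 2 => ChoiM (i,(1:Fin 2)) (j,(0:Fin 2))) = !![0,0;1,0] := by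
  ext i j; fin_cases i <;> fin_cases j <;> simp [ChoiM]
lemma choi_e11 : (Matrix.of fun i j : Fin 2 => ChoiM (i,(1:Fin 2)) (j,(1:Fin 2))) = !![0,0;0,1] := by
  ext i j; fin_cases i <;> fin_cases j <;> simp [ChoiM]

lemma dec_e00 : (!![1,0;0,0] : Matrix (Fin 2) (Fin 2) ℂ) = (2⁻¹:ℂ) • 1 + (2⁻¹:ℂ) • sigmaZ := by
  ext i j; fin_cases i <;> fin_cases j <;> simp [sigmaZ] <;> norm_num
lemma dec_e11 : (!![0,0;0,1] : Matrix (Fin 2) (Fin 2) ℂ) = (2⁻¹:ℂ) • 1 + (-2⁻¹:ℂ) • sigmaZ := by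
  ext i j; fin_cases i <;> fin_cases j <;> simp [sigmaZ] <;> norm_num
lemma dec_e01 : (!![0,1;0,0] : Matrix (Fin 2) (Fin 2) ℂ) = (2⁻¹:ℂ) • sigmaX + (Complex.I/2) • sigmaY := by
  ext i j; fin_cases i <;> fin_cases j <;> simp [sigmaX, sigmaY] <;> ring_nf <;>
    simp [Complex.I_sq] <;> ring
lemma dec_e10 : (!![0,0;1,0] : Matrix (Fin 2) (Fin 2) ℂ) = (2⁻¹:ℂ) • sigmaX + (-(Complex.I/2)) • sigmaY := by
  ext i j; fin_cases i <;> fin_cases j <;> simp [sigmaX, sigmaY] <;> ring_nf <;>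
    simp [Complex.I_sq] <;> ring

/-- The Algoet–Fujiwara conditions: complete positivity of a map with diagonal part
`diag(λ₁,λ₂,λ₃)` and translation `(0,0,t₃)`, with `|t₃| + |λ₃| < 1`, implies
`(λ₁ ± λ₂)² ≤ (1 ± λ₃)² − t₃²`. -/
theorem AF_conditions_of_completelyPositive (l1 l2 l3 t3 : ℝ)
    (habs : |t3| + |l3| < 1)
    (Φ : Matrix (Fin 2) (Fin 2) ℂ →ₗ[ℂ] Matrix (Fin 2) (Fin 2) ℂ)
    (hI : Φ 1 = 1 + (t3 : ℂ) • sigmaZ)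
    (hx : Φ sigmaX = (l1 : ℂ) • sigmaX)
    (hy : Φ sigmaY = (l2 : ℂ) • sigmaY)
    (hz : Φ sigmaZ = (l3 : ℂ) • sigmaZ)
    (hCP : CompletelyPositive Φ) :
    (l1 + l2) ^ 2 ≤ (1 + l3) ^ 2 - t3 ^ 2 ∧ (l1 - l2) ^ 2 ≤ (1 - l3) ^ 2 - t3 ^ 2 := by
  have hΦ00 : Φ !![1,0;0,0] = (2⁻¹:ℂ) • (1 + (t3:ℂ) • sigmaZ) + (2⁻¹:ℂ) • ((l3:ℂ) • sigmaZ) := by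
    rw [dec_e00, map_add, _root_.map_smul, _root_.map_smul, hI, hz]
  have hΦ11 : Φ !![0,0;0,1] = (2⁻¹:ℂ) • (1 + (t3:ℂ) • sigmaZ) + (-2⁻¹:ℂ) • ((l3:ℂ) • sigmaZ) := by
    rw [dec_e11, map_add, _root_.map_smul, _root_.map_smul, hI, hz]
  have hΦ01 : Φ !![0,1;0,0] = (2⁻¹:ℂ) • ((l1:ℂ) • sigmaX) + (Complex.I/2) • ((l2:ℂ) • sigmaY) := by
    rw [dec_e01, map_add, _root_.map_smul, _root_.map_smul, hx, hy]
  have hΦ10 : Φ !![0,0;1,0] = (2⁻¹:ℂ) • ((l1:ℂ) • sigmaX) + (-(Complex.I/2)) • ((l2:ℂ) • sigmaY) := by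
    rw [dec_e10, map_add, _root_.map_smul, _root_.map_smul, hx, hy]
  have hC := hCP 2 ChoiM ChoiM_posSemidef
  set C : Matrix (Fin 2 × Fin 2) (Fin 2 × Fin 2) ℂ :=
    Matrix.of fun p q : Fin 2 × Fin 2 =>
      Φ (Matrix.of fun i j : Fin 2 => ChoiM (i, p.2) (j, q.2)) p.1 q.1 with hCdef
  -- entries
  have c0000 : C (0,0) (0,0) = ((1 + t3 + l3)/2 : ℝ) := by
    show Φ (Matrix.of fun i j : Fin 2 => ChoiM (i,(0:Fin 2)) (j,(0:Fin 2))) 0 0 = _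
    rw [choi_e00, hΦ00]
    simp [sigmaZ, Matrix.one_apply]
    push_cast; ring
  have c0011 : C (0,0) (1,1) = ((l1 + l2)/2 : ℝ) := by
    show Φ (Matrix.of fun i j : Fin 2 => ChoiM (i,(0:Fin 2)) (j,(1:Fin 2))) 0 1 = _
    rw [choi_e01, hΦ01]
    simp [sigmaX, sigmaY]
    linear_combination (-(l2:ℂ)/2) * Complex.I_sq
  have c1100 : C (1,1) (0,0) = ((l1 + l2)/2 : ℝ) := by
    show Φ (Matrix.of fun i j : Fin 2 => ChoiM (i,(1:Fin 2)) (j,(0:Fin 2))) 1 0 = _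
    rw [choi_e10, hΦ10]
    simp [sigmaX, sigmaY]
    linear_combination (-(l2:ℂ)/2) * Complex.I_sq
  have c1111 : C (1,1) (1,1) = ((1 + l3 - t3)/2 : ℝ) := by
    show Φ (Matrix.of fun i j : Fin 2 => ChoiM (i,(1:Fin 2)) (j,(1:Fin 2))) 1 1 = _
    rw [choi_e11, hΦ11]
    simp [sigmaZ, Matrix.one_apply]
    push_cast; ring
  have c0101 : C (0,1) (0,1) = ((1 + t3 - l3)/2 : ℝ) := by
    show Φ (Matrix.of fun i j : Fin 2 => ChoiM (i,(1:Fin 2)) (j,(1:Fin 2))) 0 0 = _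
    rw [choi_e11, hΦ11]
    simp [sigmaZ, Matrix.one_apply]
    push_cast; ring
  have c0110 : C (0,1) (1,0) = ((l1 - l2)/2 : ℝ) := by
    show Φ (Matrix.of fun i j : Fin 2 => ChoiM (i,(1:Fin 2)) (j,(0:Fin 2))) 0 1 = _
    rw [choi_e10, hΦ10]
    simp [sigmaX, sigmaY]
    linear_combination ((l2:ℂ)/2) * Complex.I_sq
  have c1001 : C (1,0) (0,1) = ((l1 - l2)/2 : ℝ) := by
    show Φ (Matrix.of fun i j : Fin 2 => ChoiM (i,(0:Fin 2)) (j,(1:Fin 2))) 1 0 = _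
    rw [choi_e01, hΦ01]
    simp [sigmaX, sigmaY]
    linear_combination ((l2:ℂ)/2) * Complex.I_sq
  have c1010 : C (1,0) (1,0) = ((1 - t3 - l3)/2 : ℝ) := by
    show Φ (Matrix.of fun i j : Fin 2 => ChoiM (i,(0:Fin 2)) (j,(0:Fin 2))) 1 1 = _
    rw [choi_e00, hΦ00]
    simp [sigmaZ, Matrix.one_apply]
    push_cast; ring
  -- first inequality
  have hq1 : ∀ s : ℝ, 0 ≤ ((1 + t3 + l3)/2) * (s*s) + (l1 + l2) * s + (1 + l3 - t3)/2 := by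
    intro s
    have h := hC.dotProduct_mulVec_nonneg (fun p : Fin 2 × Fin 2 => if p = (0,0) then (s:ℂ) else if p = (1,1) then 1 else 0)
    have hdot : star (fun p : Fin 2 × Fin 2 => if p = (0,0) then (s:ℂ) else if p = (1,1) then 1 else 0) ⬝ᵥ
        C *ᵥ (fun p : Fin 2 × Fin 2 => if p = (0,0) then (s:ℂ) else if p = (1,1) then 1 else 0)
        = (s:ℂ)*(s:ℂ)*C (0,0) (0,0) + (s:ℂ)*C (0,0) (1,1) + (s:ℂ)*C (1,1) (0,0) + C (1,1) (1,1) := by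
      simp [dotProduct, mulVec, Fintype.sum_prod_type, Fin.sum_univ_two, Prod.ext_iff]
      ring
    rw [hdot, c0000, c0011, c1100, c1111] at h
    rw [show ((s:ℂ)*(s:ℂ)*(((1 + t3 + l3)/2 : ℝ):ℂ) + (s:ℂ)*(((l1 + l2)/2 : ℝ):ℂ)
        + (s:ℂ)*(((l1 + l2)/2 : ℝ):ℂ) + (((1 + l3 - t3)/2 : ℝ):ℂ))
        = ((((1 + t3 + l3)/2) * (s*s) + (l1 + l2) * s + (1 + l3 - t3)/2 : ℝ) : ℂ) by
      push_cast; ring] at h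
    exact_mod_cast h
  have hq2 : ∀ s : ℝ, 0 ≤ ((1 + t3 - l3)/2) * (s*s) + (l1 - l2) * s + (1 - t3 - l3)/2 := by
    intro s
    have h := hC.dotProduct_mulVec_nonneg (fun p : Fin 2 × Fin 2 => if p = (0,1) then (s:ℂ) else if p = (1,0) then 1 else 0)
    have hdot : star (fun p : Fin 2 × Fin 2 => if p = (0,1) then (s:ℂ) else if p = (1,0) then 1 else 0) ⬝ᵥ
        C *ᵥ (fun p : Fin 2 × Fin 2 => if p = (0,1) then (s:ℂ) else if p = (1,0) then 1 else 0)
        = (s:ℂ)*(s:ℂ)*C (0,1) (0,1) + (s:ℂ)*C (0,1) (1,0) + (s:ℂ)*C (1,0) (0,1) + C (1,0) (1,0) := by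
      simp [dotProduct, mulVec, Fintype.sum_prod_type, Fin.sum_univ_two, Prod.ext_iff]
      ring
    rw [hdot, c0101, c0110, c1001, c1010] at h
    rw [show ((s:ℂ)*(s:ℂ)*(((1 + t3 - l3)/2 : ℝ):ℂ) + (s:ℂ)*(((l1 - l2)/2 : ℝ):ℂ)
        + (s:ℂ)*(((l1 - l2)/2 : ℝ):ℂ) + (((1 - t3 - l3)/2 : ℝ):ℂ))
        = ((((1 + t3 - l3)/2) * (s*s) + (l1 - l2) * s + (1 - t3 - l3)/2 : ℝ) : ℂ) by
      push_cast; ring] at h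
    exact_mod_cast h
  have hd1 := discrim_le_zero hq1
  have hd2 := discrim_le_zero hq2
  rw [discrim] at hd1 hd2
  constructor <;> nlinarith [hd1, hd2]

end
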